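/- If κ, ℓ are nonnegative nonincreasing locally integrable functions on (0,∞) with κ ⋆ ℓ = 1, and c₁ t^{−α} ≤ κ(t) ≤ c₂ t^{−α} for all t > 0 with 0 < α < 1 and c₁, c₂ > 0, then there exist constants C₁, C₂ > 0 such that ℓ(t) ≤ C₁ t^{α−1} and ∫₀ᵗ ℓ ≥ C₂ t^{α} for all t > 0. -/

import Mathlib

open MeasureTheory Set intervalIntegral

theorem stmt2 (κ ℓ : ℝ → ℝ) (α c₁ c₂ : ℝ)
    (hα0 : 0 < α) (hα1 : α < 1) (hc₁ : 0 < c₁) (hc₂ : 0 < c₂)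
    (hκint : LocallyIntegrableOn κ (Ioi 0))
    (hℓint : LocallyIntegrableOn ℓ (Ioi 0))
    (hκ0 : ∀ t ∈ Ioi (0:ℝ), 0 ≤ κ t)
    (hℓ0 : ∀ t ∈ Ioi (0:ℝ), 0 ≤ ℓ t)
    (hκmono : AntitoneOn κ (Ioi 0))
    (hℓmono : AntitoneOn ℓ (Ioi 0))
    (hconv : ∀ t > (0:ℝ), (∫ τ in (0:ℝ)..t, κ τ * ℓ (t - τ)) = 1)
    (hκlow : ∀ t > (0:ℝ), c₁ * t ^ (-α) ≤ κ t)
    (hκup : ∀ t > (0:ℝ), κ t ≤ c₂ * t ^ (-α)) :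
    ∃ C₁ > (0:ℝ), ∃ C₂ > (0:ℝ), ∀ t > (0:ℝ),
      ℓ t ≤ C₁ * t ^ (α - 1) ∧ C₂ * t ^ α ≤ ∫ τ in (0:ℝ)..t, ℓ τ := by
  have h1α : (0:ℝ) < 1 - α := by linarith
  have hκm : AEStronglyMeasurable κ (volume.restrict (Ioi 0)) := hκint.aestronglyMeasurable
  have hℓm : AEStronglyMeasurable ℓ (volume.restrict (Ioi 0)) := hℓint.aestronglyMeasurable
  have hne : ∀ c : ℝ, ∀ᵐ τ : ℝ, τ ≠ c := by
    intro c
    rw [ae_iff]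
    simpa using measure_singleton c
  -- value of the rpow integral
  have hrpow : ∀ b : ℝ, 0 < b → (∫ τ in (0:ℝ)..b, τ ^ (-α)) = b ^ (1 - α) / (1 - α) := by
    intro b hb
    rw [integral_rpow (Or.inl (by linarith : (-1:ℝ) < -α))]
    rw [Real.zero_rpow (by intro h; rw [show -α + 1 = 1 - α by ring] at h; linarith)]
    rw [show -α + 1 = 1 - α by ring]
    ring
  -- κ is integrable on (0, b]
  have hκii : ∀ b : ℝ, 0 < b → IntervalIntegrable κ volume 0 b := by
    intro b hb
    rw [intervalIntegrable_iff_integrableOn_Ioc_of_le hb.le]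
    have hbound : IntegrableOn (fun τ => c₂ * τ ^ (-α)) (Ioc 0 b) volume := by
      have h := (intervalIntegrable_rpow' (show (-1:ℝ) < -α by linarith) (a := 0) (b := b)).const_mul c₂
      rwa [intervalIntegrable_iff_integrableOn_Ioc_of_le hb.le] at h
    refine hbound.mono' (hκm.mono_measure (Measure.restrict_mono Ioc_subset_Ioi_self le_rfl)) ?_
    filter_upwards [ae_restrict_mem measurableSet_Ioc] with τ hτ
    rw [Real.norm_eq_abs, abs_of_nonneg (hκ0 τ hτ.1)]
    exact hκup τ hτ.1
  -- integral bounds for κ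
  have hκlowI : ∀ b : ℝ, 0 < b → c₁ * (b ^ (1 - α) / (1 - α)) ≤ ∫ τ in (0:ℝ)..b, κ τ := by
    intro b hb
    have h1 : (∫ τ in (0:ℝ)..b, c₁ * τ ^ (-α)) = c₁ * (b ^ (1 - α) / (1 - α)) := by
      rw [intervalIntegral.integral_const_mul, hrpow b hb]
    rw [← h1]
    refine integral_mono_ae_restrict hb.le
      ((intervalIntegrable_rpow' (by linarith)).const_mul c₁) (hκii b hb) ?_
    filter_upwards [ae_restrict_mem measurableSet_Icc, ae_restrict_of_ae (hne 0)] with τ hτ hτ0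
    exact hκlow τ (lt_of_le_of_ne hτ.1 (Ne.symm hτ0))
  have hκupI : ∀ b : ℝ, 0 < b → (∫ τ in (0:ℝ)..b, κ τ) ≤ c₂ * (b ^ (1 - α) / (1 - α)) := by
    intro b hb
    have h1 : (∫ τ in (0:ℝ)..b, c₂ * τ ^ (-α)) = c₂ * (b ^ (1 - α) / (1 - α)) := by
      rw [intervalIntegral.integral_const_mul, hrpow b hb]
    rw [← h1]
    refine integral_mono_ae_restrict hb.le (hκii b hb)
      ((intervalIntegrable_rpow' (by linarith)).const_mul c₂) ?_
    filter_upwards [ae_restrict_mem measurableSet_Icc, ae_restrict_of_ae (hne 0)] with τ hτ hτ0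
    exact hκup τ (lt_of_le_of_ne hτ.1 (Ne.symm hτ0))
  -- the convolution integrand is interval integrable
  have hgii : ∀ t : ℝ, 0 < t → IntervalIntegrable (fun τ => κ τ * ℓ (t - τ)) volume 0 t := by
    intro t ht
    by_contra h
    have h0 := intervalIntegral.integral_undef h
    rw [hconv t ht] at h0
    norm_num at h0
  set C₁ : ℝ := (1 - α) * 2 ^ (1 - α) / c₁ with hC₁def
  have h2pow : (0:ℝ) < 2 ^ (1 - α) := Real.rpow_pos_of_pos (by norm_num) _
  have hC₁ : 0 < C₁ := by positivity
  -- STEP 1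
  have step1 : ∀ t : ℝ, 0 < t → ℓ t ≤ C₁ * t ^ (α - 1) := by
    intro t ht
    have ht2 : 0 < t / 2 := by linarith
    have hg : IntervalIntegrable (fun τ => κ τ * ℓ (t - τ)) volume 0 t := hgii t ht
    have hg1 : IntervalIntegrable (fun τ => κ τ * ℓ (t - τ)) volume 0 (t / 2) :=
      hg.mono_set (by rw [uIcc_of_le ht2.le, uIcc_of_le ht.le]; exact Icc_subset_Icc le_rfl (by linarith))
    have hg2 : IntervalIntegrable (fun τ => κ τ * ℓ (t - τ)) volume (t / 2) t :=
      hg.mono_set (by rw [uIcc_of_le (by linarith : t / 2 ≤ t), uIcc_of_le ht.le]; exact Icc_subset_Icc ht2.le le_rfl)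
    have hsplit : (∫ τ in (0:ℝ)..(t / 2), κ τ * ℓ (t - τ)) + ∫ τ in (t / 2)..t, κ τ * ℓ (t - τ) = 1 := by
      rw [integral_add_adjacent_intervals hg1 hg2]; exact hconv t ht
    have h2nn : 0 ≤ ∫ τ in (t / 2)..t, κ τ * ℓ (t - τ) := by
      refine integral_nonneg_of_ae_restrict (by linarith) ?_
      filter_upwards [ae_restrict_mem measurableSet_Icc, ae_restrict_of_ae (hne t)] with τ hτ hτt
      have hτ0 : 0 < τ := lt_of_lt_of_le ht2 hτ.1
      have h1 : 0 < t - τ := sub_pos.mpr (lt_of_le_of_ne hτ.2 hτt)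
      exact mul_nonneg (hκ0 τ hτ0) (hℓ0 _ h1)
    have hmono1 : (∫ τ in (0:ℝ)..(t / 2), ℓ t * κ τ) ≤ ∫ τ in (0:ℝ)..(t / 2), κ τ * ℓ (t - τ) := by
      refine integral_mono_ae_restrict ht2.le ((hκii (t / 2) ht2).const_mul (ℓ t)) hg1 ?_
      filter_upwards [ae_restrict_mem measurableSet_Icc, ae_restrict_of_ae (hne 0)] with τ hτ hτ0
      have h0 : 0 < τ := lt_of_le_of_ne hτ.1 (Ne.symm hτ0)
      have htτ : 0 < t - τ := by have := hτ.2; simp only [mem_Icc] at *; linarith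
      have hll : ℓ t ≤ ℓ (t - τ) := hℓmono (mem_Ioi.mpr htτ) (mem_Ioi.mpr ht) (by linarith [h0])
      calc ℓ t * κ τ = κ τ * ℓ t := mul_comm _ _
        _ ≤ κ τ * ℓ (t - τ) := mul_le_mul_of_nonneg_left hll (hκ0 τ h0)
    have hkey : ℓ t * (c₁ * ((t / 2) ^ (1 - α) / (1 - α))) ≤ 1 := by
      have h1 : (∫ τ in (0:ℝ)..(t / 2), ℓ t * κ τ) = ℓ t * ∫ τ in (0:ℝ)..(t / 2), κ τ :=
        integral_const_mul _ _
      have h2 : ℓ t * (c₁ * ((t / 2) ^ (1 - α) / (1 - α))) ≤ ℓ t * ∫ τ in (0:ℝ)..(t / 2), κ τ :=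
        mul_le_mul_of_nonneg_left (hκlowI _ ht2) (hℓ0 t ht)
      rw [h1] at hmono1
      linarith
    have hD : 0 < c₁ * ((t / 2) ^ (1 - α) / (1 - α)) := by positivity
    have hid : (t / 2) ^ (1 - α) * (2:ℝ) ^ (1 - α) = t ^ (1 - α) := by
      rw [← Real.mul_rpow ht2.le (by norm_num : (0:ℝ) ≤ 2)]
      norm_num
    have hid2 : t ^ (1 - α) * t ^ (α - 1) = 1 := by
      rw [← Real.rpow_add ht]
      norm_num
    have heq : C₁ * t ^ (α - 1) = 1 / (c₁ * ((t / 2) ^ (1 - α) / (1 - α))) := by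
      rw [hC₁def, eq_div_iff hD.ne']
      calc (1 - α) * 2 ^ (1 - α) / c₁ * t ^ (α - 1) * (c₁ * ((t / 2) ^ (1 - α) / (1 - α)))
          = ((t / 2) ^ (1 - α) * 2 ^ (1 - α)) * t ^ (α - 1) * (c₁ / c₁) * ((1 - α) / (1 - α)) := by
            ring
        _ = 1 := by
            rw [hid, hid2, div_self hc₁.ne', div_self h1α.ne']
            norm_num
    rw [heq]
    exact (le_div_iff₀ hD).mpr hkey
  -- ℓ is integrable on (0, b]
  have hℓii : ∀ b : ℝ, 0 < b → IntervalIntegrable ℓ volume 0 b := by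
    intro b hb
    rw [intervalIntegrable_iff_integrableOn_Ioc_of_le hb.le]
    have hbound : IntegrableOn (fun u => C₁ * u ^ (α - 1)) (Ioc 0 b) volume := by
      have h := (intervalIntegrable_rpow' (show (-1:ℝ) < α - 1 by linarith) (a := 0) (b := b)).const_mul C₁
      rwa [intervalIntegrable_iff_integrableOn_Ioc_of_le hb.le] at h
    refine hbound.mono' (hℓm.mono_measure (Measure.restrict_mono Ioc_subset_Ioi_self le_rfl)) ?_
    filter_upwards [ae_restrict_mem measurableSet_Ioc] with u hu
    rw [Real.norm_eq_abs, abs_of_nonneg (hℓ0 u hu.1)]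
    exact step1 u hu.1
  -- choice of ε
  set X : ℝ := C₁ * c₂ * 2 ^ (1 - α) with hXdef
  have hX : 0 < X := by positivity
  set B : ℝ := (1 - α) / (2 * X) with hBdef
  have hB : 0 < B := by positivity
  set ε : ℝ := min (1 / 2) (B ^ (1 - α)⁻¹) with hεdef
  have hε0 : 0 < ε := lt_min (by norm_num) (Real.rpow_pos_of_pos hB _)
  have hεhalf : ε ≤ 1 / 2 := min_le_left _ _
  have hεpow : ε ^ (1 - α) ≤ B := by
    calc ε ^ (1 - α) ≤ (B ^ (1 - α)⁻¹) ^ (1 - α) :=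
          Real.rpow_le_rpow hε0.le (min_le_right _ _) h1α.le
      _ = B := by
          rw [← Real.rpow_mul hB.le, inv_mul_cancel₀ h1α.ne', Real.rpow_one]
  have hhalf : X * ε ^ (1 - α) / (1 - α) ≤ 1 / 2 := by
    rw [div_le_iff₀ h1α]
    have h1 : X * ε ^ (1 - α) ≤ X * B := mul_le_mul_of_nonneg_left hεpow hX.le
    have h2 : X * B = (1 - α) / 2 := by
      rw [hBdef]
      field_simp
    linarith
  refine ⟨C₁, hC₁, ε ^ α / (2 * c₂), by positivity, fun t ht => ⟨step1 t ht, ?_⟩⟩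
  -- STEP 2
  have hεt : 0 < ε * t := mul_pos hε0 ht
  have ht2 : 0 < t / 2 := by linarith
  set m : ℝ := (1 - ε) * t with hmdef
  have hm0 : 0 < m := mul_pos (by linarith) ht
  have hmt : m < t := by nlinarith
  have hm2 : t / 2 ≤ m := by nlinarith
  have key : (∫ u in (0:ℝ)..t, κ (t - u) * ℓ u) = 1 := by
    have h1 : (∫ u in (0:ℝ)..t, κ (t - u) * ℓ u)
        = ∫ u in (0:ℝ)..t, (fun τ => κ τ * ℓ (t - τ)) (t - u) := by
      refine intervalIntegral.integral_congr fun u _ => ?_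
      simp only [sub_sub_cancel]
    rw [h1, intervalIntegral.integral_comp_sub_left (fun τ => κ τ * ℓ (t - τ)) t,
      sub_self, sub_zero]
    exact hconv t ht
  have hfii : IntervalIntegrable (fun u => κ (t - u) * ℓ u) volume 0 t := by
    have h := (hgii t ht).comp_sub_left t
    simp only [sub_zero, sub_self, sub_sub_cancel] at h
    exact h.symm
  have hf1 : IntervalIntegrable (fun u => κ (t - u) * ℓ u) volume 0 m :=
    hfii.mono_set (by rw [uIcc_of_le hm0.le, uIcc_of_le ht.le]; exact Icc_subset_Icc le_rfl hmt.le)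
  have hf2 : IntervalIntegrable (fun u => κ (t - u) * ℓ u) volume m t :=
    hfii.mono_set (by rw [uIcc_of_le hmt.le, uIcc_of_le ht.le]; exact Icc_subset_Icc hm0.le le_rfl)
  have hsplit : (∫ u in (0:ℝ)..m, κ (t - u) * ℓ u) + ∫ u in m..t, κ (t - u) * ℓ u = 1 := by
    rw [integral_add_adjacent_intervals hf1 hf2]; exact key
  -- part 2 : tail is at most 1/2
  have hκc : IntervalIntegrable (fun u => κ (t - u)) volume m t := by
    have h := (hκii (ε * t) hεt).comp_sub_left t
    simp only [sub_zero] at h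
    rw [show t - ε * t = m by rw [hmdef]; ring] at h
    exact h.symm
  have hpart2 : (∫ u in m..t, κ (t - u) * ℓ u) ≤ 1 / 2 := by
    have hb1 : (∫ u in m..t, κ (t - u) * ℓ u) ≤ ∫ u in m..t, κ (t - u) * (C₁ * m ^ (α - 1)) := by
      refine integral_mono_ae_restrict hmt.le hf2 (hκc.mul_const _) ?_
      filter_upwards [ae_restrict_mem measurableSet_Icc, ae_restrict_of_ae (hne t)] with u hu hut
      have hu0 : 0 < u := lt_of_lt_of_le hm0 hu.1
      have htu : 0 < t - u := sub_pos.mpr (lt_of_le_of_ne hu.2 hut)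
      have hlu : ℓ u ≤ ℓ m := hℓmono (mem_Ioi.mpr hm0) (mem_Ioi.mpr hu0) hu.1
      exact mul_le_mul_of_nonneg_left (hlu.trans (step1 m hm0)) (hκ0 _ htu)
    have hb2 : (∫ u in m..t, κ (t - u) * (C₁ * m ^ (α - 1)))
        = (∫ u in m..t, κ (t - u)) * (C₁ * m ^ (α - 1)) := integral_mul_const _ _
    have hb3 : (∫ u in m..t, κ (t - u)) = ∫ x in (0:ℝ)..(ε * t), κ x := by
      rw [intervalIntegral.integral_comp_sub_left κ t, sub_self,
        show t - m = ε * t by rw [hmdef]; ring]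
    have hb4 : (∫ x in (0:ℝ)..(ε * t), κ x) ≤ c₂ * ((ε * t) ^ (1 - α) / (1 - α)) := hκupI _ hεt
    have hmono_pow : C₁ * m ^ (α - 1) ≤ C₁ * (t / 2) ^ (α - 1) :=
      mul_le_mul_of_nonneg_left (Real.rpow_le_rpow_of_nonpos ht2 hm2 (by linarith)) hC₁.le
    have hκnn : 0 ≤ ∫ x in (0:ℝ)..(ε * t), κ x := by
      refine integral_nonneg_of_ae_restrict hεt.le ?_
      filter_upwards [ae_restrict_mem measurableSet_Icc, ae_restrict_of_ae (hne 0)] with x hx hx0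
      exact hκ0 x (lt_of_le_of_ne hx.1 (Ne.symm hx0))
    have hb5 : (∫ u in m..t, κ (t - u)) * (C₁ * m ^ (α - 1))
        ≤ (c₂ * ((ε * t) ^ (1 - α) / (1 - α))) * (C₁ * (t / 2) ^ (α - 1)) := by
      rw [hb3]
      exact mul_le_mul hb4 hmono_pow (by positivity) (by positivity)
    -- compute the right hand side
    have hid : (t / 2) ^ (1 - α) * (2:ℝ) ^ (1 - α) = t ^ (1 - α) := by
      rw [← Real.mul_rpow ht2.le (by norm_num : (0:ℝ) ≤ 2)]
      norm_num
    have hid0 : (t / 2) ^ (α - 1) * (t / 2) ^ (1 - α) = 1 := by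
      rw [← Real.rpow_add ht2]
      norm_num
    have hidm : (t / 2) ^ (α - 1) * t ^ (1 - α) = 2 ^ (1 - α) := by
      rw [← hid, ← mul_assoc, hid0, one_mul]
    have hb6 : (c₂ * ((ε * t) ^ (1 - α) / (1 - α))) * (C₁ * (t / 2) ^ (α - 1))
        = X * ε ^ (1 - α) / (1 - α) := by
      rw [Real.mul_rpow hε0.le ht.le, hXdef]
      field_simp
      linear_combination hidm
    linarith [hb1, hb2 ▸ hb1, hb5, hb6 ▸ hb5, hhalf]
  -- part 1 : head is bounded by the ℓ-integral
  have hℓ1 : IntervalIntegrable ℓ volume 0 m := hℓii m hm0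
  have hℓ2 : IntervalIntegrable ℓ volume m t :=
    (hℓii t ht).mono_set (by rw [uIcc_of_le hmt.le, uIcc_of_le ht.le]; exact Icc_subset_Icc hm0.le le_rfl)
  have hLsplit : (∫ u in (0:ℝ)..m, ℓ u) ≤ ∫ u in (0:ℝ)..t, ℓ u := by
    rw [← integral_add_adjacent_intervals hℓ1 hℓ2]
    have h0 : 0 ≤ ∫ u in m..t, ℓ u := by
      refine integral_nonneg_of_ae_restrict hmt.le ?_
      filter_upwards [ae_restrict_mem measurableSet_Icc] with u hu
      exact hℓ0 u (lt_of_lt_of_le hm0 hu.1)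
    linarith
  have hpart1 : (∫ u in (0:ℝ)..m, κ (t - u) * ℓ u)
      ≤ c₂ * (ε * t) ^ (-α) * ∫ u in (0:ℝ)..t, ℓ u := by
    have hb1 : (∫ u in (0:ℝ)..m, κ (t - u) * ℓ u)
        ≤ ∫ u in (0:ℝ)..m, c₂ * (ε * t) ^ (-α) * ℓ u := by
      refine integral_mono_ae_restrict hm0.le hf1 (hℓ1.const_mul _) ?_
      filter_upwards [ae_restrict_mem measurableSet_Icc, ae_restrict_of_ae (hne 0)] with u hu hu0
      have h0u : 0 < u := lt_of_le_of_ne hu.1 (Ne.symm hu0)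
      have htu : ε * t ≤ t - u := by
        have := hu.2; rw [hmdef] at this; nlinarith
      have hκb : κ (t - u) ≤ c₂ * (ε * t) ^ (-α) :=
        (hκmono (mem_Ioi.mpr hεt) (mem_Ioi.mpr (by linarith)) htu).trans (hκup _ hεt)
      exact mul_le_mul_of_nonneg_right hκb (hℓ0 u h0u)
    have hb2 : (∫ u in (0:ℝ)..m, c₂ * (ε * t) ^ (-α) * ℓ u)
        = c₂ * (ε * t) ^ (-α) * ∫ u in (0:ℝ)..m, ℓ u := integral_const_mul _ _
    have hb3 : c₂ * (ε * t) ^ (-α) * (∫ u in (0:ℝ)..m, ℓ u)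
        ≤ c₂ * (ε * t) ^ (-α) * ∫ u in (0:ℝ)..t, ℓ u :=
      mul_le_mul_of_nonneg_left hLsplit (by positivity)
    linarith [hb2 ▸ hb1]
  have hfinal : 1 / 2 ≤ c₂ * (ε * t) ^ (-α) * ∫ u in (0:ℝ)..t, ℓ u := by linarith
  have hP : 0 < c₂ * (ε * t) ^ (-α) := by positivity
  have hdiv : (1 / 2) / (c₂ * (ε * t) ^ (-α)) ≤ ∫ u in (0:ℝ)..t, ℓ u :=
    (div_le_iff₀ hP).mpr (by linarith [mul_comm (c₂ * (ε * t) ^ (-α)) (∫ u in (0:ℝ)..t, ℓ u)])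
  have heq2 : (1 / 2) / (c₂ * (ε * t) ^ (-α)) = ε ^ α / (2 * c₂) * t ^ α := by
    rw [Real.rpow_neg hεt.le, Real.mul_rpow hε0.le ht.le]
    have h1 : (0:ℝ) < ε ^ α := Real.rpow_pos_of_pos hε0 _
    have h2 : (0:ℝ) < t ^ α := Real.rpow_pos_of_pos ht _
    field_simp
  linarith [heq2 ▸ hdiv]
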